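/- Let W, P be d × n real matrices such that Wᵀ P = 0. Then ‖W + P‖₁ ≥ ‖W‖₁, where ‖·‖₁ denotes the trace norm (nuclear norm), i.e., the sum of the singular values, equivalently trace((AᵀA)^{1/2}). -/

import Mathlib

open Matrix

variable {m : ℕ}

lemma trace_nonneg_of_posSemidef {M : Matrix (Fin m) (Fin m) ℝ}
    (hM : M.PosSemidef) : 0 ≤ M.trace :=
  Finset.sum_nonneg fun i _ => hM.diag_nonneg

lemma trace_conj_nonneg {M : Matrix (Fin m) (Fin m) ℝ} (hM : M.PosSemidef)
    (Q : Matrix (Fin m) (Fin m) ℝ) : 0 ≤ (Q * M * Qᵀ).trace := by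
  have := hM.mul_mul_conjTranspose_same Q
  rw [conjTranspose_eq_transpose_of_trivial] at this
  exact trace_nonneg_of_posSemidef this

lemma posSemidef_smul {M : Matrix (Fin m) (Fin m) ℝ} (hM : M.PosSemidef)
    {c : ℝ} (hc : 0 ≤ c) : (c • M).PosSemidef := by
  refine ⟨?_, fun x => ?_⟩
  · unfold Matrix.IsHermitian
    rw [conjTranspose_smul, hM.1]
    simp
  · exact (hM.smul hc).2 x

/-- The positive semidefinite square root (spectral form). -/
noncomputable def psdSqrt {A : Matrix (Fin m) (Fin m) ℝ} (hA : A.PosSemidef) :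
    Matrix (Fin m) (Fin m) ℝ :=
  (hA.1.eigenvectorUnitary : Matrix (Fin m) (Fin m) ℝ) *
    diagonal ((RCLike.ofReal : ℝ → ℝ) ∘ Real.sqrt ∘ hA.1.eigenvalues) *
    (star hA.1.eigenvectorUnitary : Matrix (Fin m) (Fin m) ℝ)

open scoped MatrixOrder in
lemma psdSqrt_eq {A : Matrix (Fin m) (Fin m) ℝ} (hA : A.PosSemidef) :
    psdSqrt hA = CFC.sqrt A := by
  rw [CFC.sqrt_eq_real_sqrt A hA.nonneg, cfcₙ_eq_cfc (hf0 := Real.sqrt_zero), hA.1.cfc_eq]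
  simp [psdSqrt, IsHermitian.cfc, Unitary.conjStarAlgAut_apply]

open scoped MatrixOrder in
lemma psdSqrt_posSemidef {A : Matrix (Fin m) (Fin m) ℝ} (hA : A.PosSemidef) :
    (psdSqrt hA).PosSemidef := by
  rw [psdSqrt_eq]; exact (CFC.sqrt_nonneg A).posSemidef

open scoped MatrixOrder in
lemma psdSqrt_mul_self {A : Matrix (Fin m) (Fin m) ℝ} (hA : A.PosSemidef) :
    psdSqrt hA * psdSqrt hA = A := by
  rw [psdSqrt_eq]; exact CFC.sqrt_mul_sqrt_self A hA.nonneg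

lemma trace_sqrt_le {A B : Matrix (Fin m) (Fin m) ℝ} (hA : A.PosSemidef) (hB : B.PosSemidef)
    (hBA : (B - A).PosSemidef) : (psdSqrt hA).trace ≤ (psdSqrt hB).trace := by
  set S := psdSqrt hA with hSdef
  set R := psdSqrt hB with hRdef
  have hS : S.PosSemidef := psdSqrt_posSemidef hA
  have hR : R.PosSemidef := psdSqrt_posSemidef hB
  have hSsym : Sᵀ = S := by
    rw [← conjTranspose_eq_transpose_of_trivial]; exact hS.1
  have hRsym : Rᵀ = R := by
    rw [← conjTranspose_eq_transpose_of_trivial]; exact hR.1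
  have hSS : S * S = A := psdSqrt_mul_self hA
  have hRR : R * R = B := psdSqrt_mul_self hB
  -- main ε-inequality
  have key : ∀ ε : ℝ, 0 < ε → S.trace ≤ R.trace + ε * m := by
    intro ε hε
    set T : Matrix (Fin m) (Fin m) ℝ := R + ε • 1 with hTdef
    have hT : T.PosDef := by
      refine Matrix.PosDef.posSemidef_add hR ?_
      rw [smul_one_eq_diagonal]
      exact posDef_diagonal_iff.mpr fun i => hε
    set Q : Matrix (Fin m) (Fin m) ℝ := psdSqrt hT.posSemidef with hQdef
    have hQ : Q.PosSemidef := psdSqrt_posSemidef hT.posSemidef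
    have hQsym : Qᵀ = Q := by
      rw [← conjTranspose_eq_transpose_of_trivial]; exact hQ.1
    have hQQ : Q * Q = T := psdSqrt_mul_self hT.posSemidef
    have hQunit : IsUnit Q.det := by
      have hdT : 0 < T.det := hT.det_pos
      rw [← hQQ, det_mul] at hdT
      have : Q.det ≠ 0 := fun h => by simp [h] at hdT
      exact this.isUnit
    have hQQinv : Q * Q⁻¹ = 1 := mul_nonsing_inv Q hQunit
    have hQinvQ : Q⁻¹ * Q = 1 := nonsing_inv_mul Q hQunit
    have hQisym : Q⁻¹ᵀ = Q⁻¹ := by rw [transpose_nonsing_inv, hQsym]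
    have hTinv : Q⁻¹ * Q⁻¹ = T⁻¹ := by rw [← hQQ]; exact (Matrix.mul_inv_rev Q Q).symm
    -- Step 1 : 2 * tr S ≤ tr (Q⁻¹ * A * Q⁻¹) + tr T
    have step1 : 2 * S.trace ≤ (Q⁻¹ * A * Q⁻¹).trace + T.trace := by
      have h0 : 0 ≤ ((Q⁻¹ * S - Q) * (Q⁻¹ * S - Q)ᵀ).trace := by
        have := posSemidef_self_mul_conjTranspose (Q⁻¹ * S - Q)
        rw [conjTranspose_eq_transpose_of_trivial] at this
        exact trace_nonneg_of_posSemidef this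
      have hexp : (Q⁻¹ * S - Q) * (Q⁻¹ * S - Q)ᵀ
          = Q⁻¹ * A * Q⁻¹ - Q⁻¹ * (S * Q) - Q * (S * Q⁻¹) + T := by
        rw [transpose_sub, transpose_mul, hSsym, hQisym, hQsym]
        rw [← hSS, ← hQQ]
        noncomm_ring
      rw [hexp] at h0
      have htr1 : (Q⁻¹ * (S * Q)).trace = S.trace := by
        rw [trace_mul_comm, mul_assoc, hQQinv, mul_one]
      have htr2 : (Q * (S * Q⁻¹)).trace = S.trace := by
        rw [trace_mul_comm, mul_assoc, hQinvQ, mul_one]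
      rw [trace_add, trace_sub, trace_sub, htr1, htr2] at h0
      linarith
    -- Step 2 : tr (Q⁻¹ * A * Q⁻¹) ≤ tr (Q⁻¹ * (T * T) * Q⁻¹)
    have step2 : (Q⁻¹ * A * Q⁻¹).trace ≤ (Q⁻¹ * (T * T) * Q⁻¹).trace := by
      have hpsd : (T * T - A).PosSemidef := by
        have hTT : T * T - A = ((2 * ε) • R + (ε ^ 2) • 1) + (B - A) := by
          rw [hTdef, ← hRR]
          have expand : (R + ε • 1) * (R + ε • 1) = R * R + (2 * ε) • R + (ε ^ 2) • (1 : Matrix (Fin m) (Fin m) ℝ) := by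
            simp only [add_mul, mul_add, smul_mul_assoc, mul_smul_comm, one_mul, mul_one,
              smul_smul, pow_two]
            module
          rw [expand]
          module
        rw [hTT]
        exact ((posSemidef_smul hR (by linarith)).add
          (posSemidef_smul Matrix.PosSemidef.one (by positivity))).add hBA
      have := trace_conj_nonneg hpsd Q⁻¹
      rw [hQisym] at this
      have heq : Q⁻¹ * (T * T - A) * Q⁻¹ = Q⁻¹ * (T * T) * Q⁻¹ - Q⁻¹ * A * Q⁻¹ := by
        noncomm_ring
      rw [heq, trace_sub] at this
      linarith
    -- Step 3 : tr (Q⁻¹ * (T * T) * Q⁻¹) = tr T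
    have step3 : (Q⁻¹ * (T * T) * Q⁻¹).trace = T.trace := by
      have hTdet : IsUnit T.det := isUnit_iff_isUnit_det T |>.mp hT.isUnit
      rw [trace_mul_cycle, hTinv, ← mul_assoc, nonsing_inv_mul T hTdet, one_mul]
    have hTtr : T.trace = R.trace + ε * m := by
      rw [hTdef, trace_add, trace_smul, trace_one]
      simp
    linarith
  refine le_of_forall_pos_le_add fun ε hε => ?_
  have h1 := key (ε / (m + 1)) (by positivity)
  have h2 : (ε / (m + 1)) * m < ε := by
    rw [div_mul_eq_mul_div, div_lt_iff₀ (by positivity)]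
    nlinarith [hε]
  linarith


/-- The trace norm (nuclear norm) of a real matrix `A`, defined as
`trace ((Aᵀ A)^{1/2})` where the square root is the positive semidefinite
square root of the positive semidefinite matrix `Aᵀ A`. -/
noncomputable def traceNorm {d n : ℕ} (A : Matrix (Fin d) (Fin n) ℝ) : ℝ :=
  (((Matrix.posSemidef_conjTranspose_mul_self A).1.eigenvectorUnitary : Matrix (Fin n) (Fin n) ℝ) *
    diagonal ((RCLike.ofReal : ℝ → ℝ) ∘ Real.sqrt ∘ (Matrix.posSemidef_conjTranspose_mul_self A).1.eigenvalues) *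
    (star (Matrix.posSemidef_conjTranspose_mul_self A).1.eigenvectorUnitary : Matrix (Fin n) (Fin n) ℝ)).trace

theorem stmt_1 {d n : ℕ} (W P : Matrix (Fin d) (Fin n) ℝ) (h : Wᵀ * P = 0) :
    traceNorm W ≤ traceNorm (W + P) := by
  have hPW : Pᵀ * W = 0 := by
    have := congrArg Matrix.transpose h
    rwa [transpose_mul, transpose_transpose, transpose_zero] at this
  have hdiff : (W + P)ᴴ * (W + P) - Wᴴ * W = Pᴴ * P := by
    simp only [conjTranspose_eq_transpose_of_trivial]
    rw [transpose_add, Matrix.add_mul, Matrix.mul_add, Matrix.mul_add, h, hPW]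
    abel
  have hpsd : ((W + P)ᴴ * (W + P) - Wᴴ * W).PosSemidef := by
    rw [hdiff]; exact posSemidef_conjTranspose_mul_self P
  exact trace_sqrt_le (posSemidef_conjTranspose_mul_self W)
    (posSemidef_conjTranspose_mul_self (W + P)) hpsd
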